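/- Let F : ℝ × ℝⁿ → ℂ be smooth and nowhere zero and U : ℝⁿ → ℂ. If F satisfies the Schrödinger-type equation i b² ∂t F = -(b⁴/2) ∇²F + U F, then the vector field V = -i b² (∇F)/F satisfies the forced complex Burgers (stochastic geodesic) equation ∂t V + (V·∇)V - (i b²/2) ∇²V = -∇U, where (V·∇)V denotes the vector with components Σ_j V_j ∂_{x_j} V_k. -/

import Mathlib

/-- Time partial derivative of a complex-valued function on `ℝ × ℝⁿ`. -/
noncomputable def ptC {n : ℕ} (f : ℝ × (Fin n → ℝ) → ℂ) (p : ℝ × (Fin n → ℝ)) : ℂ :=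
  deriv (fun s => f (s, p.2)) p.1

/-- Spatial partial derivative in the `k`-th coordinate. -/
noncomputable def pdx {n : ℕ} (k : Fin n) (f : ℝ × (Fin n → ℝ) → ℂ)
    (p : ℝ × (Fin n → ℝ)) : ℂ :=
  deriv (fun s => f (p.1, Function.update p.2 k s)) (p.2 k)

/-- Spatial Laplacian. -/
noncomputable def lapC {n : ℕ} (f : ℝ × (Fin n → ℝ) → ℂ) (p : ℝ × (Fin n → ℝ)) : ℂ :=
  ∑ k, pdx k (pdx k f) p

/-- Partial derivative of the potential `U : ℝⁿ → ℂ`. -/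
noncomputable def pdU {n : ℕ} (k : Fin n) (U : (Fin n → ℝ) → ℂ) (x : Fin n → ℝ) : ℂ :=
  deriv (fun s => U (Function.update x k s)) (x k)

/-- The unit vector in the time direction. -/
def etv (n : ℕ) : ℝ × (Fin n → ℝ) := (1, 0)

/-- The unit vector in the `j`-th space direction. -/
def exv {n : ℕ} (j : Fin n) : ℝ × (Fin n → ℝ) := (0, Pi.single j 1)

lemma ptC_eq {n : ℕ} {f : ℝ × (Fin n → ℝ) → ℂ} {p : ℝ × (Fin n → ℝ)}
    (hf : DifferentiableAt ℝ f p) : ptC f p = fderiv ℝ f p (etv n) := by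
  have hcurve : HasDerivAt (fun s : ℝ => ((s, p.2) : ℝ × (Fin n → ℝ))) (etv n) p.1 :=
    (hasDerivAt_id p.1).prodMk (hasDerivAt_const p.1 p.2)
  exact (hf.hasFDerivAt.comp_hasDerivAt p.1 hcurve).deriv

lemma pdx_eq {n : ℕ} {f : ℝ × (Fin n → ℝ) → ℂ} {p : ℝ × (Fin n → ℝ)} {k : Fin n}
    (hf : DifferentiableAt ℝ f p) : pdx k f p = fderiv ℝ f p (exv k) := by
  have hcurve : HasDerivAt (fun s : ℝ => ((p.1, Function.update p.2 k s) : ℝ × (Fin n → ℝ)))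
      (exv k) (p.2 k) :=
    (hasDerivAt_const (p.2 k) p.1).prodMk (hasDerivAt_update p.2 k (p.2 k))
  have hp : ((p.1, Function.update p.2 k (p.2 k)) : ℝ × (Fin n → ℝ)) = p := by simp
  have hf' : HasFDerivAt f (fderiv ℝ f p) ((p.1, Function.update p.2 k (p.2 k))) := by
    rw [hp]; exact hf.hasFDerivAt
  exact (hf'.comp_hasDerivAt (p.2 k) hcurve).deriv

lemma pdU_eq {n : ℕ} {U : (Fin n → ℝ) → ℂ} {x : Fin n → ℝ} {k : Fin n}
    (hU : DifferentiableAt ℝ U x) : pdU k U x = fderiv ℝ U x (Pi.single k 1) := by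
  have hcurve : HasDerivAt (Function.update x k) (Pi.single k (1:ℝ)) (x k) :=
    hasDerivAt_update x k (x k)
  have hx : Function.update x k (x k) = x := by simp
  have hU' : HasFDerivAt U (fderiv ℝ U x) (Function.update x k (x k)) := by
    rw [hx]; exact hU.hasFDerivAt
  exact (hU'.comp_hasDerivAt (x k) hcurve).deriv

lemma contDiff_fderiv_apply {n : ℕ} {f : ℝ × (Fin n → ℝ) → ℂ}
    (hf : ContDiff ℝ 3 f) (y : ℝ × (Fin n → ℝ)) :
    ContDiff ℝ 2 (fun q => fderiv ℝ f q y) := by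
  have h1 : ContDiff ℝ 2 (fderiv ℝ f) := hf.fderiv_right (by norm_num)
  exact (ContinuousLinearMap.apply ℝ ℂ y).contDiff.comp h1

lemma contDiff_fderiv_apply' {n : ℕ} {f : ℝ × (Fin n → ℝ) → ℂ}
    (hf : ContDiff ℝ 2 f) (y : ℝ × (Fin n → ℝ)) :
    ContDiff ℝ 1 (fun q => fderiv ℝ f q y) := by
  have h1 : ContDiff ℝ 1 (fderiv ℝ f) := hf.fderiv_right (by norm_num)
  exact (ContinuousLinearMap.apply ℝ ℂ y).contDiff.comp h1

lemma fderiv_swap {n : ℕ} {f : ℝ × (Fin n → ℝ) → ℂ}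
    (hf : ContDiff ℝ 2 f) (p y v : ℝ × (Fin n → ℝ)) :
    fderiv ℝ (fun q => fderiv ℝ f q y) p v = fderiv ℝ (fun q => fderiv ℝ f q v) p y := by
  have h1 : ContDiff ℝ 1 (fderiv ℝ f) := hf.fderiv_right (by norm_num)
  have hd : DifferentiableAt ℝ (fderiv ℝ f) p := (h1.differentiable one_ne_zero) p
  have hy : HasFDerivAt (fun q => fderiv ℝ f q y)
      ((ContinuousLinearMap.apply ℝ ℂ y).comp (fderiv ℝ (fderiv ℝ f) p)) p :=
    (ContinuousLinearMap.apply ℝ ℂ y).hasFDerivAt.comp p hd.hasFDerivAt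
  have hv : HasFDerivAt (fun q => fderiv ℝ f q v)
      ((ContinuousLinearMap.apply ℝ ℂ v).comp (fderiv ℝ (fderiv ℝ f) p)) p :=
    (ContinuousLinearMap.apply ℝ ℂ v).hasFDerivAt.comp p hd.hasFDerivAt
  rw [hy.fderiv, hv.fderiv]
  simp only [ContinuousLinearMap.coe_comp', Function.comp_apply,
    ContinuousLinearMap.apply_apply]
  exact (hf.contDiffAt.isSymmSndFDerivAt (by norm_num)) v y

lemma fderiv_mul_apply' {n : ℕ} {φ ψ : ℝ × (Fin n → ℝ) → ℂ} {p : ℝ × (Fin n → ℝ)}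
    (hφ : DifferentiableAt ℝ φ p) (hψ : DifferentiableAt ℝ ψ p) (v : ℝ × (Fin n → ℝ)) :
    fderiv ℝ (fun q => φ q * ψ q) p v = fderiv ℝ φ p v * ψ p + φ p * fderiv ℝ ψ p v := by
  rw [fderiv_fun_mul hφ hψ]
  simp [smul_eq_mul]
  ring

lemma fderiv_const_mul_apply {n : ℕ} {φ : ℝ × (Fin n → ℝ) → ℂ} {p : ℝ × (Fin n → ℝ)}
    (hφ : DifferentiableAt ℝ φ p) (c : ℂ) (v : ℝ × (Fin n → ℝ)) :
    fderiv ℝ (fun q => c * φ q) p v = c * fderiv ℝ φ p v := by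
  rw [fderiv_const_mul hφ c]
  simp

lemma fderiv_add_apply' {n : ℕ} {φ ψ : ℝ × (Fin n → ℝ) → ℂ} {p : ℝ × (Fin n → ℝ)}
    (hφ : DifferentiableAt ℝ φ p) (hψ : DifferentiableAt ℝ ψ p) (v : ℝ × (Fin n → ℝ)) :
    fderiv ℝ (fun q => φ q + ψ q) p v = fderiv ℝ φ p v + fderiv ℝ ψ p v := by
  rw [fderiv_fun_add hφ hψ]; rfl

lemma fderiv_sub_apply' {n : ℕ} {φ ψ : ℝ × (Fin n → ℝ) → ℂ} {p : ℝ × (Fin n → ℝ)}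
    (hφ : DifferentiableAt ℝ φ p) (hψ : DifferentiableAt ℝ ψ p) (v : ℝ × (Fin n → ℝ)) :
    fderiv ℝ (fun q => φ q - ψ q) p v = fderiv ℝ φ p v - fderiv ℝ ψ p v := by
  rw [fderiv_fun_sub hφ hψ]; rfl

lemma fderiv_sum_apply' {n : ℕ} {A : Fin n → ℝ × (Fin n → ℝ) → ℂ} {p : ℝ × (Fin n → ℝ)}
    (h : ∀ j, DifferentiableAt ℝ (A j) p) (v : ℝ × (Fin n → ℝ)) :
    fderiv ℝ (fun q => ∑ j, A j q) p v = ∑ j, fderiv ℝ (A j) p v := by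
  rw [fderiv_fun_sum (fun j _ => h j)]
  simp

/-- If `F` solves the Schrödinger-type equation `i b² ∂t F = -(b⁴/2) ∇²F + U F`,
then `V = -i b² ∇F / F` solves the forced complex Burgers (stochastic geodesic)
equation `∂t V + (V·∇)V - (i b²/2) ∇²V = -∇U`. -/
theorem forced_complex_burgers_of_schrodinger {n : ℕ}
    (F : ℝ × (Fin n → ℝ) → ℂ) (hF : ContDiff ℝ 3 F) (hne : ∀ p, F p ≠ 0)
    (b : ℝ) (hb : 0 < b)
    (U : (Fin n → ℝ) → ℂ) (hU : Differentiable ℝ U)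
    (schrod : ∀ p, Complex.I * (b : ℂ)^2 * ptC F p
        = -((b : ℂ)^4 / 2) * lapC F p + U p.2 * F p)
    (V : Fin n → ℝ × (Fin n → ℝ) → ℂ)
    (hV : ∀ k p, V k p = -Complex.I * (b : ℂ)^2 * pdx k F p / F p) :
    ∀ (k : Fin n) (p : ℝ × (Fin n → ℝ)),
      ptC (V k) p + (∑ j, V j p * pdx j (V k) p)
        - (Complex.I * (b : ℂ)^2 / 2) * lapC (V k) p = -pdU k U p.2 := by
  intro k p
  obtain ⟨c, hc⟩ : ∃ c : ℂ, c = -(Complex.I * (b:ℂ)^2) := ⟨_, rfl⟩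
  -- basic differentiability facts
  have hF1 : Differentiable ℝ F := hF.differentiable (by norm_num)
  have hF2 : ContDiff ℝ 2 F := hF.of_le (by norm_num)
  have hGc2 : ∀ v : ℝ × (Fin n → ℝ), ContDiff ℝ 2 (fun q => fderiv ℝ F q v) :=
    fun v => contDiff_fderiv_apply hF v
  have hGd : ∀ (v : ℝ × (Fin n → ℝ)) (q), DifferentiableAt ℝ (fun r => fderiv ℝ F r v) q :=
    fun v q => ((hGc2 v).differentiable (by norm_num)) q
  have hHd : ∀ (v w : ℝ × (Fin n → ℝ)) (q),
      DifferentiableAt ℝ (fun r => fderiv ℝ (fun s => fderiv ℝ F s w) r v) q :=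
    fun v w q => ((contDiff_fderiv_apply' (hGc2 w) v).differentiable one_ne_zero) q
  -- V as a quotient
  have hVeq : ∀ j, V j = fun q => c * fderiv ℝ F q (exv j) / F q := by
    intro j; funext q
    rw [hV j q, pdx_eq (hF1 q), hc]; ring
  have hVC2 : ∀ j, ContDiff ℝ 2 (V j) := by
    intro j; rw [hVeq j]
    simp only [div_eq_mul_inv]
    exact (contDiff_const.mul (hGc2 (exv j))).mul (hF2.inv hne)
  have hV1 : ∀ j, Differentiable ℝ (V j) := fun j => (hVC2 j).differentiable (by norm_num)
  have hVddd : ∀ (j : Fin n) (q), DifferentiableAt ℝ (fun r => fderiv ℝ (V k) r (exv j)) q :=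
    fun j q => ((contDiff_fderiv_apply' (hVC2 k) (exv j)).differentiable one_ne_zero) q
  have Hvf : ∀ (j : Fin n) (q), V j q * F q = c * fderiv ℝ F q (exv j) := by
    intro j q; rw [hVeq j]
    exact div_mul_cancel₀ _ (hne q)
  -- first-order differentiated identity for V
  have keyD : ∀ (j : Fin n) (y : ℝ × (Fin n → ℝ)) (q),
      fderiv ℝ (V j) q y * F q + V j q * fderiv ℝ F q y
        = c * fderiv ℝ (fun r => fderiv ℝ F r (exv j)) q y := by
    intro j y q
    have hid : (fun r => V j r * F r) = fun r => c * fderiv ℝ F r (exv j) :=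
      funext fun r => Hvf j r
    have h1 := fderiv_mul_apply' (hV1 j q) (hF1 q) y
    have h2 : fderiv ℝ (fun r => c * fderiv ℝ F r (exv j)) q y
        = c * fderiv ℝ (fun r => fderiv ℝ F r (exv j)) q y :=
      fderiv_const_mul_apply (hGd (exv j) q) c y
    rw [hid, h2] at h1
    exact h1.symm
  have EA : ∀ j : Fin n,
      fderiv ℝ (V k) p (exv j) * F p + V k p * fderiv ℝ F p (exv j)
        = c * fderiv ℝ (fun r => fderiv ℝ F r (exv k)) p (exv j) := fun j => keyD k (exv j) p
  have ET : fderiv ℝ (V k) p (etv n) * F p + V k p * fderiv ℝ F p (etv n)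
      = c * fderiv ℝ (fun r => fderiv ℝ F r (exv k)) p (etv n) := keyD k (etv n) p
  -- second-order differentiated identity
  have Phi : ∀ j : Fin n, (fun q => fderiv ℝ (V k) q (exv j) * F q)
      = fun q => c * fderiv ℝ (fun r => fderiv ℝ F r (exv k)) q (exv j)
          - V k q * fderiv ℝ F q (exv j) := by
    intro j; funext q
    linear_combination keyD k (exv j) q
  have EB : ∀ j : Fin n,
      fderiv ℝ (fun q => fderiv ℝ (V k) q (exv j)) p (exv j) * F p
          + fderiv ℝ (V k) p (exv j) * fderiv ℝ F p (exv j)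
        = c * fderiv ℝ (fun q => fderiv ℝ (fun r => fderiv ℝ F r (exv k)) q (exv j)) p (exv j)
          - (fderiv ℝ (V k) p (exv j) * fderiv ℝ F p (exv j)
              + V k p * fderiv ℝ (fun r => fderiv ℝ F r (exv j)) p (exv j)) := by
    intro j
    have hL : fderiv ℝ (fun q => fderiv ℝ (V k) q (exv j) * F q) p (exv j)
        = fderiv ℝ (fun q => fderiv ℝ (V k) q (exv j)) p (exv j) * F p
            + fderiv ℝ (V k) p (exv j) * fderiv ℝ F p (exv j) :=
      fderiv_mul_apply' (hVddd j p) (hF1 p) (exv j)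
    have d1 : DifferentiableAt ℝ
        (fun q => c * fderiv ℝ (fun r => fderiv ℝ F r (exv k)) q (exv j)) p :=
      (hHd (exv j) (exv k) p).const_mul c
    have d2 : DifferentiableAt ℝ (fun q => V k q * fderiv ℝ F q (exv j)) p :=
      (hV1 k p).mul (hGd (exv j) p)
    have hsub : fderiv ℝ (fun q => c * fderiv ℝ (fun r => fderiv ℝ F r (exv k)) q (exv j)
          - V k q * fderiv ℝ F q (exv j)) p (exv j)
        = fderiv ℝ (fun q => c * fderiv ℝ (fun r => fderiv ℝ F r (exv k)) q (exv j)) p (exv j)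
          - fderiv ℝ (fun q => V k q * fderiv ℝ F q (exv j)) p (exv j) :=
      fderiv_sub_apply' d1 d2 (exv j)
    have h3 : fderiv ℝ (fun q => c * fderiv ℝ (fun r => fderiv ℝ F r (exv k)) q (exv j)) p (exv j)
        = c * fderiv ℝ (fun q => fderiv ℝ (fun r => fderiv ℝ F r (exv k)) q (exv j)) p (exv j) :=
      fderiv_const_mul_apply (hHd (exv j) (exv k) p) c (exv j)
    have h4 : fderiv ℝ (fun q => V k q * fderiv ℝ F q (exv j)) p (exv j)
        = fderiv ℝ (V k) p (exv j) * fderiv ℝ F p (exv j)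
          + V k p * fderiv ℝ (fun r => fderiv ℝ F r (exv j)) p (exv j) :=
      fderiv_mul_apply' (hV1 k p) (hGd (exv j) p) (exv j)
    rw [Phi j, hsub, h3, h4] at hL
    linear_combination -hL
  -- the Schrödinger equation, rewritten in fderiv form
  have hGfunc : ∀ j : Fin n, pdx j F = fun r => fderiv ℝ F r (exv j) :=
    fun j => funext fun r => pdx_eq (hF1 r)
  have hlap : ∀ q, lapC F q = ∑ j, fderiv ℝ (fun r => fderiv ℝ F r (exv j)) q (exv j) := by
    intro q
    simp only [lapC]
    refine Finset.sum_congr rfl fun j _ => ?_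
    rw [hGfunc j, pdx_eq (hGd (exv j) q)]
  have hSfun : (fun q => Complex.I * (b:ℂ)^2 * fderiv ℝ F q (etv n))
      = fun q => -((b:ℂ)^4/2) * (∑ j, fderiv ℝ (fun r => fderiv ℝ F r (exv j)) q (exv j))
          + U q.2 * F q := by
    funext q
    have h := schrod q
    rw [ptC_eq (hF1 q), hlap q] at h
    exact h
  -- base Schrödinger equation at p
  have hS0 : Complex.I * (b:ℂ)^2 * fderiv ℝ F p (etv n)
      = -((b:ℂ)^4/2) * (∑ j, fderiv ℝ (fun r => fderiv ℝ F r (exv j)) p (exv j))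
        + U p.2 * F p := by
    have h := schrod p
    rw [ptC_eq (hF1 p), hlap p] at h
    exact h
  -- differentiated Schrödinger equation at p in direction exv k
  have hUsnd : DifferentiableAt ℝ (fun q : ℝ × (Fin n → ℝ) => U q.2) p :=
    ((hU p.2).comp p differentiable_snd.differentiableAt)
  have hsndF : HasFDerivAt (fun q : ℝ × (Fin n → ℝ) => U q.2)
      ((fderiv ℝ U p.2).comp (ContinuousLinearMap.snd ℝ ℝ (Fin n → ℝ))) p :=
    (hU p.2).hasFDerivAt.comp p hasFDerivAt_snd
  have hUval : fderiv ℝ (fun q : ℝ × (Fin n → ℝ) => U q.2) p (exv k) = pdU k U p.2 := by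
    rw [hsndF.fderiv, pdU_eq (hU p.2)]
    simp [exv]
  have ES : Complex.I * (b:ℂ)^2 * fderiv ℝ (fun r => fderiv ℝ F r (exv k)) p (etv n)
      = -((b:ℂ)^4/2) * (∑ j, fderiv ℝ
            (fun q => fderiv ℝ (fun r => fderiv ℝ F r (exv k)) q (exv j)) p (exv j))
        + (pdU k U p.2 * F p + U p.2 * fderiv ℝ F p (exv k)) := by
    have hDS : fderiv ℝ (fun q => Complex.I * (b:ℂ)^2 * fderiv ℝ F q (etv n)) p (exv k)
        = fderiv ℝ (fun q => -((b:ℂ)^4/2)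
              * (∑ j, fderiv ℝ (fun r => fderiv ℝ F r (exv j)) q (exv j))
            + U q.2 * F q) p (exv k) := by
      rw [hSfun]
    have hL1 : fderiv ℝ (fun q => Complex.I * (b:ℂ)^2 * fderiv ℝ F q (etv n)) p (exv k)
        = Complex.I * (b:ℂ)^2 * fderiv ℝ (fun q => fderiv ℝ F q (etv n)) p (exv k) :=
      fderiv_const_mul_apply (hGd (etv n) p) _ (exv k)
    have hL2 : fderiv ℝ (fun q => fderiv ℝ F q (etv n)) p (exv k)
        = fderiv ℝ (fun q => fderiv ℝ F q (exv k)) p (etv n) := fderiv_swap hF2 p (etv n) (exv k)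
    have dW : DifferentiableAt ℝ
        (fun q => ∑ j, fderiv ℝ (fun r => fderiv ℝ F r (exv j)) q (exv j)) p :=
      DifferentiableAt.fun_sum (fun j _ => hHd (exv j) (exv j) p)
    have d1 : DifferentiableAt ℝ (fun q => -((b:ℂ)^4/2)
        * (∑ j, fderiv ℝ (fun r => fderiv ℝ F r (exv j)) q (exv j))) p :=
      dW.const_mul _
    have d2 : DifferentiableAt ℝ (fun q => U q.2 * F q) p := hUsnd.mul (hF1 p)
    have hR1 : fderiv ℝ (fun q => -((b:ℂ)^4/2)
          * (∑ j, fderiv ℝ (fun r => fderiv ℝ F r (exv j)) q (exv j))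
          + U q.2 * F q) p (exv k)
        = fderiv ℝ (fun q => -((b:ℂ)^4/2)
            * (∑ j, fderiv ℝ (fun r => fderiv ℝ F r (exv j)) q (exv j))) p (exv k)
          + fderiv ℝ (fun q => U q.2 * F q) p (exv k) := fderiv_add_apply' d1 d2 (exv k)
    have hR2 : fderiv ℝ (fun q => -((b:ℂ)^4/2)
          * (∑ j, fderiv ℝ (fun r => fderiv ℝ F r (exv j)) q (exv j))) p (exv k)
        = -((b:ℂ)^4/2) * fderiv ℝ
            (fun q => ∑ j, fderiv ℝ (fun r => fderiv ℝ F r (exv j)) q (exv j)) p (exv k) :=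
      fderiv_const_mul_apply dW _ (exv k)
    have hR3 : fderiv ℝ (fun q => ∑ j, fderiv ℝ (fun r => fderiv ℝ F r (exv j)) q (exv j))
          p (exv k)
        = ∑ j, fderiv ℝ (fun q => fderiv ℝ (fun r => fderiv ℝ F r (exv j)) q (exv j)) p (exv k) :=
      fderiv_sum_apply' (fun j => hHd (exv j) (exv j) p) (exv k)
    have hR4 : ∀ j : Fin n,
        fderiv ℝ (fun q => fderiv ℝ (fun r => fderiv ℝ F r (exv j)) q (exv j)) p (exv k)
          = fderiv ℝ (fun q => fderiv ℝ (fun r => fderiv ℝ F r (exv k)) q (exv j)) p (exv j) := by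
      intro j
      have e1 : fderiv ℝ (fun q => fderiv ℝ (fun r => fderiv ℝ F r (exv j)) q (exv j)) p (exv k)
          = fderiv ℝ (fun q => fderiv ℝ (fun r => fderiv ℝ F r (exv j)) q (exv k)) p (exv j) :=
        fderiv_swap (hGc2 (exv j)) p (exv j) (exv k)
      have e2 : (fun q => fderiv ℝ (fun r => fderiv ℝ F r (exv j)) q (exv k))
          = (fun q => fderiv ℝ (fun r => fderiv ℝ F r (exv k)) q (exv j)) :=
        funext fun q => fderiv_swap hF2 q (exv j) (exv k)
      rw [e1, e2]
    have hR5 : fderiv ℝ (fun q => U q.2 * F q) p (exv k)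
        = pdU k U p.2 * F p + U p.2 * fderiv ℝ F p (exv k) := by
      have h := fderiv_mul_apply' hUsnd (hF1 p) (exv k)
      rw [hUval] at h
      exact h
    rw [hL1, hL2, hR1, hR2, hR3, Finset.sum_congr rfl (fun j _ => hR4 j), hR5] at hDS
    exact hDS
  -- convert to c-form
  have hIb : Complex.I * (b:ℂ)^2 = -c := by rw [hc]; ring
  have hb4 : ((b:ℂ))^4 = -c^2 := by
    rw [hc]
    linear_combination (b:ℂ)^4 * Complex.I_sq
  have ES0' : -(c * fderiv ℝ F p (etv n))
      = c^2/2 * (∑ j, fderiv ℝ (fun r => fderiv ℝ F r (exv j)) p (exv j)) + U p.2 * F p := by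
    linear_combination hS0 - (fderiv ℝ F p (etv n)) * hIb
      - ((∑ j, fderiv ℝ (fun r => fderiv ℝ F r (exv j)) p (exv j))/2) * hb4
  have ES1' : -(c * fderiv ℝ (fun r => fderiv ℝ F r (exv k)) p (etv n))
      = c^2/2 * (∑ j, fderiv ℝ
            (fun q => fderiv ℝ (fun r => fderiv ℝ F r (exv k)) q (exv j)) p (exv j))
        + pdU k U p.2 * F p + U p.2 * fderiv ℝ F p (exv k) := by
    linear_combination ES - (fderiv ℝ (fun r => fderiv ℝ F r (exv k)) p (etv n)) * hIb
      - ((∑ j, fderiv ℝ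
            (fun q => fderiv ℝ (fun r => fderiv ℝ F r (exv k)) q (exv j)) p (exv j))/2) * hb4
  -- summed identities
  have SA : (∑ j, V j p * fderiv ℝ (V k) p (exv j)) * F p^2
      = c^2 * (∑ j, fderiv ℝ F p (exv j)
            * fderiv ℝ (fun r => fderiv ℝ F r (exv k)) p (exv j))
        - c * V k p * (∑ j, fderiv ℝ F p (exv j) * fderiv ℝ F p (exv j)) := by
    rw [Finset.sum_mul]
    calc ∑ j, V j p * fderiv ℝ (V k) p (exv j) * F p^2
        = ∑ j, (c^2 * (fderiv ℝ F p (exv j)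
              * fderiv ℝ (fun r => fderiv ℝ F r (exv k)) p (exv j))
            - c * V k p * (fderiv ℝ F p (exv j) * fderiv ℝ F p (exv j))) := by
          refine Finset.sum_congr rfl fun j _ => ?_
          linear_combination (V j p * F p) * (EA j)
            + (c * fderiv ℝ (fun r => fderiv ℝ F r (exv k)) p (exv j)
                - V k p * fderiv ℝ F p (exv j)) * (Hvf j p)
      _ = _ := by
          rw [Finset.sum_sub_distrib, ← Finset.mul_sum, ← Finset.mul_sum]
  have SAG : (∑ j, fderiv ℝ (V k) p (exv j) * fderiv ℝ F p (exv j)) * F p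
      = c * (∑ j, fderiv ℝ F p (exv j) * fderiv ℝ (fun r => fderiv ℝ F r (exv k)) p (exv j))
        - V k p * (∑ j, fderiv ℝ F p (exv j) * fderiv ℝ F p (exv j)) := by
    rw [Finset.sum_mul]
    calc ∑ j, fderiv ℝ (V k) p (exv j) * fderiv ℝ F p (exv j) * F p
        = ∑ j, (c * (fderiv ℝ F p (exv j)
              * fderiv ℝ (fun r => fderiv ℝ F r (exv k)) p (exv j))
            - V k p * (fderiv ℝ F p (exv j) * fderiv ℝ F p (exv j))) := by
          refine Finset.sum_congr rfl fun j _ => ?_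
          linear_combination (fderiv ℝ F p (exv j)) * (EA j)
      _ = _ := by
          rw [Finset.sum_sub_distrib, ← Finset.mul_sum, ← Finset.mul_sum]
  have SB : (∑ j, fderiv ℝ (fun q => fderiv ℝ (V k) q (exv j)) p (exv j)) * F p
      = c * (∑ j, fderiv ℝ
            (fun q => fderiv ℝ (fun r => fderiv ℝ F r (exv k)) q (exv j)) p (exv j))
        - 2 * (∑ j, fderiv ℝ (V k) p (exv j) * fderiv ℝ F p (exv j))
        - V k p * (∑ j, fderiv ℝ (fun r => fderiv ℝ F r (exv j)) p (exv j)) := by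
    rw [Finset.sum_mul]
    calc ∑ j, fderiv ℝ (fun q => fderiv ℝ (V k) q (exv j)) p (exv j) * F p
        = ∑ j, (c * fderiv ℝ
              (fun q => fderiv ℝ (fun r => fderiv ℝ F r (exv k)) q (exv j)) p (exv j)
            - 2 * (fderiv ℝ (V k) p (exv j) * fderiv ℝ F p (exv j))
            - V k p * fderiv ℝ (fun r => fderiv ℝ F r (exv j)) p (exv j)) := by
          refine Finset.sum_congr rfl fun j _ => ?_
          linear_combination EB j
      _ = _ := by
          rw [Finset.sum_sub_distrib, Finset.sum_sub_distrib,
            ← Finset.mul_sum, ← Finset.mul_sum, ← Finset.mul_sum]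
  -- rewrite the goal in fderiv form
  rw [ptC_eq (hV1 k p)]
  have hsum1 : (∑ j, V j p * pdx j (V k) p) = ∑ j, V j p * fderiv ℝ (V k) p (exv j) :=
    Finset.sum_congr rfl fun j _ => by rw [pdx_eq (hV1 k p)]
  have hlapV : lapC (V k) p
      = ∑ j, fderiv ℝ (fun q => fderiv ℝ (V k) q (exv j)) p (exv j) := by
    simp only [lapC]
    refine Finset.sum_congr rfl fun j _ => ?_
    rw [show pdx j (V k) = fun q => fderiv ℝ (V k) q (exv j) from
        funext fun q => pdx_eq (hV1 k q), pdx_eq (hVddd j p)]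
  rw [hsum1, hlapV]
  -- final algebra
  have hf2 : (F p)^2 ≠ 0 := pow_ne_zero 2 (hne p)
  have key : (fderiv ℝ (V k) p (etv n) + (∑ j, V j p * fderiv ℝ (V k) p (exv j))
      + c/2 * (∑ j, fderiv ℝ (fun q => fderiv ℝ (V k) q (exv j)) p (exv j))
      + pdU k U p.2) * F p^2 = 0 := by
    linear_combination (F p) * ET + SA + (c * F p/2) * SB - c * SAG - (F p) * ES1'
      + (fderiv ℝ F p (exv k)) * ES0'
      - (fderiv ℝ F p (etv n)
          + c * (∑ j, fderiv ℝ (fun r => fderiv ℝ F r (exv j)) p (exv j))/2) * (Hvf k p)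
  have key2 := (mul_eq_zero.mp key).resolve_right hf2
  linear_combination key2
    - ((∑ j, fderiv ℝ (fun q => fderiv ℝ (V k) q (exv j)) p (exv j))/2) * hIb
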